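/- The lattice D7 ⊕ A2 cannot be embedded in the lattice H ⊕ E8; that is, there is no 10 × 9 integer matrix M such that Mᵀ · G(H ⊕ E8) · M equals the Gram matrix of D7 ⊕ A2. -/

import Mathlib

open Matrix

/-- Gram matrix of the ambient lattice (10 × 10). -/
def ambientGram : Matrix (Fin 10) (Fin 10) ℤ :=
  !![0, 1, 0, 0, 0, 0, 0, 0, 0, 0;
      1, 0, 0, 0, 0, 0, 0, 0, 0, 0;
      0, 0, -2, 1, 0, 0, 0, 0, 0, 0;
      0, 0, 1, -2, 1, 0, 0, 0, 0, 0;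
      0, 0, 0, 1, -2, 1, 0, 0, 0, 1;
      0, 0, 0, 0, 1, -2, 1, 0, 0, 0;
      0, 0, 0, 0, 0, 1, -2, 1, 0, 0;
      0, 0, 0, 0, 0, 0, 1, -2, 1, 0;
      0, 0, 0, 0, 0, 0, 0, 1, -2, 0;
      0, 0, 0, 0, 1, 0, 0, 0, 0, -2]

/-- Gram matrix of the root lattice to be embedded (9 × 9). -/
def rootGram : Matrix (Fin 9) (Fin 9) ℤ :=
  !![-2, 1, 0, 0, 0, 0, 0, 0, 0;
      1, -2, 1, 0, 0, 0, 0, 0, 0;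
      0, 1, -2, 1, 0, 0, 0, 0, 0;
      0, 0, 1, -2, 1, 0, 0, 0, 0;
      0, 0, 0, 1, -2, 1, 1, 0, 0;
      0, 0, 0, 0, 1, -2, 0, 0, 0;
      0, 0, 0, 0, 1, 0, -2, 0, 0;
      0, 0, 0, 0, 0, 0, 0, -2, 1;
      0, 0, 0, 0, 0, 0, 0, 1, -2]

/- ### Auxiliary explicit matrices (certificates) -/

def matN : Matrix (Fin 9) (Fin 9) ℤ :=
  !![-12, -12, -12, -12, -12, -6, -6, 0, 0;
     -12, -24, -24, -24, -24, -12, -12, 0, 0;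
     -12, -24, -36, -36, -36, -18, -18, 0, 0;
     -12, -24, -36, -48, -48, -24, -24, 0, 0;
     -12, -24, -36, -48, -60, -30, -30, 0, 0;
     -6, -12, -18, -24, -30, -21, -15, 0, 0;
     -6, -12, -18, -24, -30, -15, -21, 0, 0;
     0, 0, 0, 0, 0, 0, 0, -8, -4;
     0, 0, 0, 0, 0, 0, 0, -4, -8]

def matGinv : Matrix (Fin 10) (Fin 10) ℤ :=
  !![0, 1, 0, 0, 0, 0, 0, 0, 0, 0;
     1, 0, 0, 0, 0, 0, 0, 0, 0, 0;
     0, 0, -4, -7, -10, -8, -6, -4, -2, -5;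
     0, 0, -7, -14, -20, -16, -12, -8, -4, -10;
     0, 0, -10, -20, -30, -24, -18, -12, -6, -15;
     0, 0, -8, -16, -24, -20, -15, -10, -5, -12;
     0, 0, -6, -12, -18, -15, -12, -8, -4, -9;
     0, 0, -4, -8, -12, -10, -8, -6, -3, -6;
     0, 0, -2, -4, -6, -5, -4, -3, -2, -3;
     0, 0, -5, -10, -15, -12, -9, -6, -3, -8]

def matU : Matrix (Fin 9) (Fin 9) ℤ :=
  !![1, 0, 0, 0, 0, 0, 0, 0, 0;
     2, 1, 0, 0, 0, 0, 0, 0, 0;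
     3, 2, 1, 0, 0, 0, 0, 0, 0;
     4, 3, 2, 1, 0, 0, 0, 0, 0;
     5, 4, 3, 2, 1, 0, 0, 0, 0;
     0, 0, 0, 0, 0, 0, 0, 1, 0;
     4, 3, 2, 1, 0, 0, -1, 0, 0;
     -10, -8, -6, -4, -2, -1, 1, -2, -1;
     -30, -24, -18, -12, -6, -3, 3, -8, -4]

def matV : Matrix (Fin 9) (Fin 9) ℤ :=
  !![0, 0, 0, 0, 0, 0, 1, 2, -6;
     1, 0, 0, 0, 0, 0, 2, 4, -12;
     0, 1, 0, 0, 0, 0, 3, 6, -18;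
     0, 0, 1, 0, 0, 0, 4, 8, -24;
     0, 0, 0, 1, 0, 0, 5, 10, -30;
     0, 0, 0, 0, 1, 0, 3, 7, -21;
     0, 0, 0, 0, 0, 0, 3, 5, -15;
     0, 0, 0, 0, 0, 0, 0, -1, 4;
     0, 0, 0, 0, 0, 1, 0, -2, 8]

def matVp : Matrix (Fin 9) (Fin 9) ℤ :=
  !![-2, 1, 0, 0, 0, 0, 0, 0, 0;
     -3, 0, 1, 0, 0, 0, 0, 0, 0;
     -4, 0, 0, 1, 0, 0, 0, 0, 0;
     -5, 0, 0, 0, 1, 0, 0, 0, 0;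
     -6, 0, 0, 0, 0, 1, 1, 0, 0;
     0, 0, 0, 0, 0, 0, 0, -2, 1;
     -5, 0, 0, 0, 0, 0, 2, 0, 0;
     12, 0, 0, 0, 0, 0, -4, 3, 0;
     3, 0, 0, 0, 0, 0, -1, 1, 0]

def matC : Matrix (Fin 9) (Fin 9) ℤ :=
  !![-1, 0, 0, 0, 0, 0, 0, 0, 0;
     1, -1, 0, 0, 0, 0, 0, 0, 0;
     0, 1, -1, 0, 0, 0, 0, 0, 0;
     0, 0, 1, -1, 0, 0, 0, 0, 0;
     0, 0, 0, 1, -1, 0, 0, 0, 0;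
     0, 0, 0, 0, 1, -1, 0, 0, 0;
     0, 0, 0, 0, 1, 0, -1, 0, 0;
     0, 0, 0, 0, 0, 0, 0, -1, 0;
     0, 0, 0, 0, 0, 0, 0, 1, -1]

def matEg : Matrix (Fin 10) (Fin 10) ℤ :=
  !![0, 0, 0, 0, 0, 0, 0, 0, 0, 0;
     1, 0, 0, 0, 0, 0, 0, 0, 0, 0;
     0, 0, -1, 0, 0, 0, 0, 0, 0, 0;
     0, 0, 1, -1, 0, 0, 0, 0, 0, 0;
     0, 0, 0, 1, -1, 0, 0, 0, 0, 0;
     0, 0, 0, 0, 1, -1, 0, 0, 0, 0;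
     0, 0, 0, 0, 0, 1, -1, 0, 0, 0;
     0, 0, 0, 0, 0, 0, 1, -1, 0, 0;
     0, 0, 0, 0, 0, 0, 0, 1, -1, 0;
     0, 0, 0, 0, 1, 0, 0, 0, 0, -1]

def matW : Matrix (Fin 9) (Fin 9) ℤ :=
  !![2, -1, 0, 0, 0, 0, 0, 0, 0;
     0, 3, -2, 0, 0, 0, 0, 0, 0;
     0, 0, 4, -3, 0, 0, 0, 0, 0;
     0, 0, 0, 5, -4, 0, 0, 0, 0;
     0, 0, 0, 0, 6, -5, -5, 0, 0;
     0, 0, 0, 0, 0, 7, -5, 0, 0;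
     0, 0, 0, 0, 0, 0, 1, 0, 0;
     0, 0, 0, 0, 0, 0, 0, 2, -1;
     0, 0, 0, 0, 0, 0, 0, 0, 1]

def alphav : Fin 9 → ℤ := ![210, 70, 35, 21, 14, 10, 240, 210, 630]

def vecg : Fin 9 → ℤ := ![-6, -12, -18, -24, -30, -21, -15, 4, 8]
def vech : Fin 9 → ℤ := ![0, 0, 0, 0, 0, 1, 0, 0, -1]
def pvec : Fin 10 → ℤ := ![1, 1, 0, 0, 0, 0, 0, 0, 0, 0]
def delta8 : Fin 9 → ℤ := fun i => if i = 8 then 1 else 0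

/- ### Generic helper lemmas -/

lemma bezout_finset {ι : Type*} [DecidableEq ι] (s : Finset ι) (f : ι → ℤ) :
    ∃ a : ι → ℤ, ∑ i ∈ s, a i * f i = s.gcd f := by
  classical
  induction s using Finset.induction_on with
  | empty => exact ⟨0, by simp⟩
  | insert b s hb ih =>
    obtain ⟨a, ha⟩ := ih
    refine ⟨fun i => if i = b then Int.gcdA (f b) (s.gcd f)
      else Int.gcdB (f b) (s.gcd f) * a i, ?_⟩
    rw [Finset.sum_insert hb, Finset.gcd_insert]
    have h1 : ∑ i ∈ s, (fun i => if i = b then Int.gcdA (f b) (s.gcd f)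
        else Int.gcdB (f b) (s.gcd f) * a i) i * f i
        = Int.gcdB (f b) (s.gcd f) * ∑ i ∈ s, a i * f i := by
      rw [Finset.mul_sum]
      refine Finset.sum_congr rfl fun i hi => ?_
      beta_reduce
      rw [if_neg (show ¬ i = b from fun h => hb (h ▸ hi))]
      ring
    rw [h1, ha, ← Int.coe_gcd, Int.gcd_eq_gcd_ab]
    beta_reduce
    rw [if_pos rfl]
    ring

lemma dot_swap {m n : ℕ} (C : Matrix (Fin m) (Fin n) ℤ) (v : Fin m → ℤ) (w : Fin n → ℤ) :
    v ⬝ᵥ (C *ᵥ w) = w ⬝ᵥ (Cᵀ *ᵥ v) := by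
  rw [dotProduct_mulVec, mulVec_transpose, dotProduct_comm]

lemma mulVec_dot {m n : ℕ} (C : Matrix (Fin m) (Fin n) ℤ) (v : Fin n → ℤ) (w : Fin m → ℤ) :
    (C *ᵥ v) ⬝ᵥ w = v ⬝ᵥ (Cᵀ *ᵥ w) := by
  rw [dotProduct_comm, dot_swap]

lemma even_quad {n : ℕ} (C S : Matrix (Fin n) (Fin n) ℤ) (h : C + Cᵀ = S) (v : Fin n → ℤ) :
    v ⬝ᵥ (S *ᵥ v) = 2 * (v ⬝ᵥ (C *ᵥ v)) := by
  rw [← h, Matrix.add_mulVec, dotProduct_add, dot_swap C v v]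
  ring

lemma diag_quad_nonneg {n : ℕ} (α : Fin n → ℤ) (hα : ∀ i, 0 ≤ α i) (z : Fin n → ℤ) :
    0 ≤ z ⬝ᵥ (Matrix.diagonal α *ᵥ z) := by
  rw [dotProduct]
  refine Finset.sum_nonneg fun i _ => ?_
  rw [Matrix.mulVec_diagonal]
  have : z i * (α i * z i) = α i * (z i * z i) := by ring
  rw [this]
  exact mul_nonneg (hα i) (mul_self_nonneg _)

lemma rootGram_negSemidef (y : Fin 9 → ℤ) : y ⬝ᵥ (rootGram *ᵥ y) ≤ 0 := by
  have hcert : matWᵀ * Matrix.diagonal alphav * matW = (420 : ℤ) • (-rootGram) := by decide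
  have h1 : (matW *ᵥ y) ⬝ᵥ (Matrix.diagonal alphav *ᵥ (matW *ᵥ y))
      = 420 * -(y ⬝ᵥ (rootGram *ᵥ y)) := by
    rw [mulVec_dot, mulVec_mulVec, mulVec_mulVec, hcert,
      Matrix.smul_mulVec, dotProduct_smul, Matrix.neg_mulVec, dotProduct_neg,
      smul_eq_mul]
  have h2 := diag_quad_nonneg alphav (by decide) (matW *ᵥ y)
  rw [h1] at h2
  linarith

set_option maxRecDepth 100000 in
lemma final_cong : ∀ z : ZMod 288,
    (-348*z^2 + 12 ≠ 0) ∧ (-348*z^2 + 24 ≠ 0) ∧ (-348*z^2 + 36 ≠ 0) ∧ (-348*z^2 + 72 ≠ 0) := by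
  decide


lemma hRN : rootGram * matN = (12:ℤ) • 1 := by decide
lemma hNR : matN * rootGram = (12:ℤ) • 1 := by decide
lemma hGsymm : ambientGramᵀ = ambientGram := by decide
lemma hRsymm : rootGramᵀ = rootGram := by decide
lemma hGiG : matGinv * ambientGram = 1 := by decide
lemma hVVp : matV * matVp = 1 := by decide
lemma hURV : matU * rootGram * matV
    = 1 + (11:ℤ) • Matrix.single (8:Fin 9) (8:Fin 9) (1:ℤ) := by decide
lemma hCsum : matC + matCᵀ = rootGram := by decide
lemma hEgsum : matEg + matEgᵀ = ambientGram := by decide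
lemma hVg : matV *ᵥ delta8 = vecg := by decide
lemma hRg : rootGram *ᵥ vecg = (12:ℤ) • vech := by decide
lemma hgRg : vecg ⬝ᵥ (rootGram *ᵥ vecg) = -348 := by decide
lemma hpGp : pvec ⬝ᵥ (ambientGram *ᵥ pvec) = 2 := by decide
lemma hRNtr : (rootGram * matN).trace = 108 := by decide


lemma kpos_aux (kk yq cc δ : ℤ) (h2 : δ * δ * 2 = yq + cc * cc * kk)
    (hq : yq ≤ 0) (hd : δ ≠ 0) : 0 < kk := by
  have hdet2 : 1 ≤ δ * δ := by
    rcases lt_or_gt_of_ne hd with h | h <;> nlinarith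
  by_contra hkle
  push_neg at hkle
  nlinarith [mul_self_nonneg cc]

lemma m_cases (k m k' : ℤ) (hm : 12 = k * m) (hk' : k = 2 * k')
    (hpos : 0 < k) (hle : k ≤ 12) : m = 1 ∨ m = 2 ∨ m = 3 ∨ m = 6 := by
  interval_cases k <;> omega

set_option maxHeartbeats 1600000 in
theorem stmt_4 :
    ¬ ∃ M : Matrix (Fin 10) (Fin 9) ℤ,
      Mᵀ * ambientGram * M = rootGram := by
  rintro ⟨M, hM⟩
  -- basic objects
  set B := Mᵀ * ambientGram with hB
  have hBM : B * M = rootGram := hM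
  set T := M * matN * B with hT
  have hTM : T * M = (12:ℤ) • M := by
    rw [hT, Matrix.mul_assoc (M * matN) B M, hBM, Matrix.mul_assoc, hNR,
      Matrix.mul_smul, Matrix.mul_one]
  have hBT : B * T = (12:ℤ) • B := by
    rw [hT, ← Matrix.mul_assoc B (M * matN) B, ← Matrix.mul_assoc B M matN, hBM, hRN,
      Matrix.smul_mul, Matrix.one_mul]
  clear_value B T
  set Q := (12:ℤ) • (1 : Matrix (Fin 10) (Fin 10) ℤ) - T with hQ
  have hQM : Q * M = 0 := by
    rw [hQ, Matrix.sub_mul, Matrix.smul_mul, Matrix.one_mul, hTM, sub_self]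
  have hBQ : B * Q = 0 := by
    rw [hQ, Matrix.mul_sub, Matrix.mul_smul, Matrix.mul_one, hBT, sub_self]
  clear_value Q
  have hQtr : Q.trace = 12 := by
    have hTtr : T.trace = 108 := by
      have h1 : T.trace = (rootGram * matN).trace := by
        rw [hT, Matrix.trace_mul_comm, ← Matrix.mul_assoc, hBM]
      rw [h1, hRNtr]
    rw [hQ, Matrix.trace_sub, Matrix.trace_smul, Matrix.trace_one, hTtr]
    norm_num
  have hdiag : ∃ i, Q i i ≠ 0 := by
    by_contra hcon
    push_neg at hcon
    have h0 : Q.trace = 0 := by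
      simp [Matrix.trace, Matrix.diag, hcon]
    rw [hQtr] at h0; exact absurd h0 (by norm_num)
  obtain ⟨i0, hi0⟩ := hdiag
  -- the vector e
  set e0 : Fin 10 → ℤ := fun r => Q r i0 with he0
  have hBe0 : B *ᵥ e0 = 0 := by
    funext j
    have h := congrFun (congrFun hBQ j) i0
    simpa [Matrix.mul_apply, Matrix.mulVec, dotProduct, he0] using h
  obtain ⟨a0, ha0⟩ := bezout_finset Finset.univ e0
  set d := Finset.univ.gcd e0 with hd
  have hdne : d ≠ 0 := by
    intro h
    rw [hd, Finset.gcd_eq_zero_iff] at h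
    exact hi0 (h i0 (Finset.mem_univ i0))
  have hdvd : ∀ r, d ∣ e0 r := fun r => Finset.gcd_dvd (Finset.mem_univ r)
  set e : Fin 10 → ℤ := fun r => e0 r / d with he
  have he0d : ∀ r, e0 r = d * e r := fun r => (Int.mul_ediv_cancel' (hdvd r)).symm
  clear_value e0 d e
  have hBe : B *ᵥ e = 0 := by
    funext j
    have h2 : d * (B *ᵥ e) j = 0 := by
      have h3 : (B *ᵥ e0) j = d * (B *ᵥ e) j := by
        simp only [Matrix.mulVec, dotProduct, Finset.mul_sum]
        exact Finset.sum_congr rfl fun r _ => by rw [he0d r]; ring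
      rw [← h3, hBe0]; simp
    simpa using (mul_eq_zero.mp h2).resolve_left hdne
  have hbez_e : ∑ i, a0 i * e i = 1 := by
    have h1 : d * ∑ i, a0 i * e i = d * 1 := by
      rw [mul_one, Finset.mul_sum]
      calc ∑ i, d * (a0 i * e i) = ∑ i, a0 i * e0 i := by
            exact Finset.sum_congr rfl fun r _ => by rw [he0d r]; ring
        _ = d := by rw [ha0, hd]
    exact mul_left_cancel₀ hdne h1
  set Ge := ambientGram *ᵥ e with hGe
  clear_value Ge
  obtain ⟨b0, hb0⟩ := bezout_finset Finset.univ Ge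
  have hd2 : Finset.univ.gcd Ge ∣ 1 := by
    have hge : ∀ r, Finset.univ.gcd Ge ∣ e r := by
      intro r
      have h2 : matGinv *ᵥ Ge = e := by
        rw [hGe, mulVec_mulVec, hGiG, one_mulVec]
      have h1 : e r = ∑ j, matGinv r j * Ge j := by rw [← h2]; rfl
      rw [h1]
      exact Finset.dvd_sum fun j _ => Dvd.dvd.mul_left (Finset.gcd_dvd (Finset.mem_univ j)) _
    have h4 : Finset.univ.gcd Ge ∣ ∑ i, a0 i * e i :=
      Finset.dvd_sum fun i _ => Dvd.dvd.mul_left (hge i) _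
    rwa [hbez_e] at h4
  have hxex : ∃ x : Fin 10 → ℤ, Ge ⬝ᵥ x = 1 := by
    have hsum : ∀ c : Fin 10 → ℤ, Ge ⬝ᵥ c = ∑ i, c i * Ge i := fun c => by
      rw [dotProduct]; exact Finset.sum_congr rfl fun i _ => mul_comm _ _
    rcases Int.isUnit_iff.mp (isUnit_of_dvd_one hd2) with h | h
    · exact ⟨b0, by rw [hsum, hb0, h]⟩
    · refine ⟨-b0, ?_⟩
      rw [hsum]
      have h5 : ∑ i, (-b0) i * Ge i = -∑ i, b0 i * Ge i := by
        rw [← Finset.sum_neg_distrib]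
        exact Finset.sum_congr rfl fun i _ => by simp
      rw [h5, hb0, h]; norm_num
  obtain ⟨x, hx⟩ := hxex
  have hx' : ∑ j, Ge j * x j = 1 := hx
  set k := e ⬝ᵥ Ge with hk
  set Eo : Matrix (Fin 10) (Fin 10) ℤ := Matrix.of (fun i j => e i * Ge j) with hEo
  clear_value k Eo
  set A : Matrix (Fin 10) (Fin 10) ℤ :=
    Matrix.of (fun i j => Fin.lastCases (e i) (fun j' => M i j') j) with hA
  have hAcol : ∀ i (j : Fin 9), A i (Fin.castSucc j) = M i j := by
    intro i j
    show Matrix.of (fun i j => Fin.lastCases (e i) (fun j' => M i j') j) i (Fin.castSucc j) = M i j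
    rw [Matrix.of_apply]
    exact Fin.lastCases_castSucc j
  have hAlast : ∀ i, A i (Fin.last 9) = e i := by
    intro i
    show Matrix.of (fun i j => Fin.lastCases (e i) (fun j' => M i j') j) i (Fin.last 9) = e i
    rw [Matrix.of_apply]
    exact Fin.lastCases_last
  have hAsplit : ∀ v : Fin 10 → ℤ, A *ᵥ v
      = M *ᵥ (fun j => v (Fin.castSucc j)) + (v (Fin.last 9)) • e := by
    intro v; funext i
    have h1 : (A *ᵥ v) i = ∑ j : Fin 10, A i j * v j := rfl
    have h2 : (M *ᵥ fun j => v (Fin.castSucc j)) i = ∑ j : Fin 9, M i j * v (Fin.castSucc j) := rfl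
    rw [Pi.add_apply, Pi.smul_apply, smul_eq_mul, h1, h2, Fin.sum_univ_castSucc]
    congr 1
    · rw [hAlast]; ring
  clear_value A
  have hdetA : A.det ≠ 0 := by
    intro hdet
    obtain ⟨v, hv, hAv⟩ := Matrix.exists_mulVec_eq_zero_iff.mpr hdet
    have hsplit : M *ᵥ (fun j => v (Fin.castSucc j)) + (v (Fin.last 9)) • e = 0 := by
      rw [← hAsplit]; exact hAv
    have hRy : rootGram *ᵥ (fun j => v (Fin.castSucc j)) = 0 := by
      have h1 := congrArg (fun ww => B *ᵥ ww) hsplit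
      simp only [Matrix.mulVec_add, Matrix.mulVec_smul, hBe, smul_zero, add_zero,
        Matrix.mulVec_zero] at h1
      rwa [mulVec_mulVec, hBM] at h1
    have hy0 : (fun j => v (Fin.castSucc j)) = (0 : Fin 9 → ℤ) := by
      have h2 := congrArg (fun ww => matN *ᵥ ww) hRy
      simp only [mulVec_mulVec, hNR, Matrix.mulVec_zero] at h2
      rw [Matrix.smul_mulVec, one_mulVec] at h2
      funext j
      have h3 := congrFun h2 j
      simp only [Pi.smul_apply, smul_eq_mul, Pi.zero_apply] at h3 ⊢
      exact (mul_eq_zero.mp h3).resolve_left (by norm_num)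
    have h3 : (v (Fin.last 9)) • e = 0 := by
      rw [hy0, Matrix.mulVec_zero, zero_add] at hsplit
      exact hsplit
    have hc0 : v (Fin.last 9) = 0 := by
      have h5 : ∀ i, v (Fin.last 9) * e i = 0 := fun i => by
        have h6 := congrFun h3 i
        simpa using h6
      calc v (Fin.last 9) = ∑ i, v (Fin.last 9) * (a0 i * e i) := by
            rw [← Finset.mul_sum, hbez_e, mul_one]
        _ = 0 := Finset.sum_eq_zero fun i _ => by
            rw [show v (Fin.last 9) * (a0 i * e i) = a0 i * (v (Fin.last 9) * e i) by ring,
              h5, mul_zero]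
    apply hv
    funext j
    rw [Pi.zero_apply]
    induction j using Fin.lastCases with
    | last => exact hc0
    | cast j' => simpa using congrFun hy0 j'
  have hQe : Q *ᵥ e = (12:ℤ) • e := by
    rw [hQ, Matrix.sub_mulVec, Matrix.smul_mulVec, one_mulVec]
    have hTe : T *ᵥ e = 0 := by
      rw [hT, ← mulVec_mulVec, hBe, Matrix.mulVec_zero]
    rw [hTe, sub_zero]
  set Z := k • Q - (12:ℤ) • Eo with hZ
  have hZM : Z * M = 0 := by
    have h1 : Mᵀ *ᵥ Ge = 0 := by rw [hGe, mulVec_mulVec, ← hB, hBe]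
    have hEoM : Eo * M = 0 := by
      ext i j
      rw [Matrix.mul_apply, Matrix.zero_apply]
      calc ∑ r, Eo i r * M r j = e i * ∑ r, Mᵀ j r * Ge r := by
            rw [Finset.mul_sum]
            exact Finset.sum_congr rfl fun r _ => by
              rw [hEo, Matrix.of_apply, Matrix.transpose_apply]; ring
        _ = e i * (Mᵀ *ᵥ Ge) j := rfl
        _ = 0 := by rw [h1]; simp
    rw [hZ, Matrix.sub_mul, Matrix.smul_mul, hQM, Matrix.smul_mul, hEoM, smul_zero,
      smul_zero, sub_self]
  have hZe : Z *ᵥ e = 0 := by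
    have hEoe : Eo *ᵥ e = k • e := by
      funext i
      have h7 : (Eo *ᵥ e) i = e i * ∑ j, Ge j * e j := by
        calc (Eo *ᵥ e) i = ∑ j, Eo i j * e j := rfl
          _ = e i * ∑ j, Ge j * e j := by
              rw [Finset.mul_sum]
              exact Finset.sum_congr rfl fun j _ => by
                rw [hEo, Matrix.of_apply]; ring
      rw [h7, Pi.smul_apply, smul_eq_mul, hk]
      rw [show (dotProduct e Ge) = ∑ j, e j * Ge j from rfl]
      rw [show (∑ j, Ge j * e j) = ∑ j, e j * Ge j from
        Finset.sum_congr rfl fun j _ => mul_comm _ _]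
      ring
    rw [hZ, Matrix.sub_mulVec, Matrix.smul_mulVec, Matrix.smul_mulVec, hQe, hEoe]
    rw [smul_smul, smul_smul, mul_comm]
    exact sub_self _
  have hZA : Z * A = 0 := by
    ext i j
    rw [Matrix.zero_apply]
    induction j using Fin.lastCases with
    | last =>
      have h := congrFun hZe i
      calc (Z * A) i (Fin.last 9) = ∑ r, Z i r * e r := by
            rw [Matrix.mul_apply]
            exact Finset.sum_congr rfl fun r _ => by rw [hAlast]
        _ = 0 := by simpa [Matrix.mulVec, dotProduct] using h
    | cast j' =>
      have h := congrFun (congrFun hZM i) j'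
      calc (Z * A) i (Fin.castSucc j') = ∑ r, Z i r * M r j' := by
            rw [Matrix.mul_apply]
            exact Finset.sum_congr rfl fun r _ => by rw [hAcol]
        _ = 0 := by simpa [Matrix.mul_apply] using h
  have hZ0 : k • Q = (12:ℤ) • Eo := by
    have h1 : A.det • Z = 0 := by
      have h2 := congrArg (fun W => W * A.adjugate) hZA
      simp only [Matrix.zero_mul] at h2
      rwa [Matrix.mul_assoc, Matrix.mul_adjugate, Matrix.mul_smul, Matrix.mul_one] at h2
    have hZzero : Z = 0 := by
      ext i j
      have h3 := congrFun (congrFun h1 i) j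
      simp only [Matrix.smul_apply, smul_eq_mul, Matrix.zero_apply] at h3
      rw [Matrix.zero_apply]
      exact (mul_eq_zero.mp h3).resolve_left hdetA
    rw [hZ] at hZzero
    exact sub_eq_zero.mp hZzero
  have hentry : ∀ i j, k * Q i j = 12 * (e i * Ge j) := by
    intro i j
    have h := congrFun (congrFun hZ0 i) j
    simpa [Matrix.smul_apply, smul_eq_mul, hEo] using h
  have hk12 : k ∣ 12 := by
    refine ⟨∑ i, ∑ j, a0 i * x j * Q i j, ?_⟩
    calc (12:ℤ) = 12 * ((∑ i, a0 i * e i) * (∑ j, Ge j * x j)) := by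
          rw [hbez_e, hx', mul_one, mul_one]
      _ = ∑ i, ∑ j, (a0 i * x j) * (12 * (e i * Ge j)) := by
          rw [Finset.sum_mul_sum, Finset.mul_sum]
          exact Finset.sum_congr rfl fun i _ => by
            rw [Finset.mul_sum]
            exact Finset.sum_congr rfl fun j _ => by ring
      _ = ∑ i, ∑ j, (a0 i * x j) * (k * Q i j) := by
          exact Finset.sum_congr rfl fun i _ => Finset.sum_congr rfl fun j _ => by
            rw [hentry]
      _ = k * ∑ i, ∑ j, a0 i * x j * Q i j := by
          rw [Finset.mul_sum]
          exact Finset.sum_congr rfl fun i _ => by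
            rw [Finset.mul_sum]
            exact Finset.sum_congr rfl fun j _ => by ring
  -- the key quadratic expansion
  have hMG : ∀ (yv : Fin 9 → ℤ) (z : Fin 10 → ℤ),
      (M *ᵥ yv) ⬝ᵥ (ambientGram *ᵥ z) = yv ⬝ᵥ (B *ᵥ z) := by
    intro yv z
    rw [mulVec_dot, mulVec_mulVec, ← hB]
  have hexpand : ∀ (yv : Fin 9 → ℤ) (c : ℤ),
      (M *ᵥ yv + c • e) ⬝ᵥ (ambientGram *ᵥ (M *ᵥ yv + c • e))
        = yv ⬝ᵥ (rootGram *ᵥ yv) + c * c * k := by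
    intro yv c
    have hBe' : yv ⬝ᵥ (B *ᵥ e) = 0 := by rw [hBe]; simp
    have hT1 : (M *ᵥ yv) ⬝ᵥ (ambientGram *ᵥ (M *ᵥ yv)) = yv ⬝ᵥ (rootGram *ᵥ yv) := by
      rw [hMG, mulVec_mulVec, hBM]
    have hT3 : (M *ᵥ yv) ⬝ᵥ (ambientGram *ᵥ (c • e)) = 0 := by
      rw [hMG, Matrix.mulVec_smul, dotProduct_smul, hBe', smul_zero]
    have hT2 : (c • e) ⬝ᵥ (ambientGram *ᵥ (M *ᵥ yv)) = 0 := by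
      rw [smul_dotProduct, dot_swap, hGsymm, hMG, hBe', smul_zero]
    have hT4 : (c • e) ⬝ᵥ (ambientGram *ᵥ (c • e)) = c * c * k := by
      rw [smul_dotProduct, Matrix.mulVec_smul, dotProduct_smul, ← hGe, ← hk,
        smul_eq_mul, smul_eq_mul]
      ring
    rw [Matrix.mulVec_add, dotProduct_add, add_dotProduct, add_dotProduct,
      hT1, hT2, hT3, hT4, add_zero]
    ring
  -- positivity of k
  have hkpos : 0 < k := by
    set y2 := A.adjugate *ᵥ pvec with hy2
    have hAy2 : A *ᵥ y2 = A.det • pvec := by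
      rw [hy2, mulVec_mulVec, Matrix.mul_adjugate, Matrix.smul_mulVec, one_mulVec]
    clear_value y2
    have hsplit := hAsplit y2
    have hL : (A.det • pvec) ⬝ᵥ (ambientGram *ᵥ (A.det • pvec)) = A.det * A.det * 2 := by
      rw [smul_dotProduct, Matrix.mulVec_smul, dotProduct_smul, hpGp, smul_eq_mul,
        smul_eq_mul]
      ring
    have h2 : A.det * A.det * 2
        = (fun j => y2 (Fin.castSucc j)) ⬝ᵥ (rootGram *ᵥ (fun j => y2 (Fin.castSucc j)))
          + (y2 (Fin.last 9)) * (y2 (Fin.last 9)) * k := by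
      calc A.det * A.det * 2 = (A.det • pvec) ⬝ᵥ (ambientGram *ᵥ (A.det • pvec)) := hL.symm
        _ = _ := by rw [← hAy2, hsplit]; exact hexpand _ _
    have hqneg := rootGram_negSemidef (fun j => y2 (Fin.castSucc j))
    exact kpos_aux k _ (y2 (Fin.last 9)) A.det h2 hqneg hdetA
  have hkeven : ∃ k', k = 2 * k' := by
    refine ⟨e ⬝ᵥ (matEg *ᵥ e), ?_⟩
    rw [hk, hGe]
    exact even_quad matEg ambientGram hEgsum e
  obtain ⟨m, hm⟩ := hk12
  -- the vector u
  set w := B *ᵥ x with hw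
  set u := matN *ᵥ w with hu
  clear_value w u
  have hEox : Eo *ᵥ x = e := by
    funext i
    calc (Eo *ᵥ x) i = ∑ j, Eo i j * x j := rfl
      _ = e i * ∑ j, Ge j * x j := by
          rw [Finset.mul_sum]
          exact Finset.sum_congr rfl fun j _ => by rw [hEo, Matrix.of_apply]; ring
      _ = e i := by rw [hx', mul_one]
  have hTx : T *ᵥ x = M *ᵥ u := by
    rw [hu, hw, mulVec_mulVec, mulVec_mulVec, ← hT]
  have hstar : M *ᵥ (k • u) + (12:ℤ) • e = (12 * k) • x := by
    have h1 := congrArg (fun W => W *ᵥ x) hZ0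
    simp only [Matrix.smul_mulVec] at h1
    rw [hEox, hQ, Matrix.sub_mulVec, Matrix.smul_mulVec, one_mulVec, hTx,
      smul_sub, smul_smul] at h1
    rw [Matrix.mulVec_smul, mul_comm 12 k]
    rw [sub_eq_iff_eq_add] at h1
    rw [h1]
    abel
  have hS2 := even_quad matEg ambientGram hEgsum x
  set S2 := x ⬝ᵥ (matEg *ᵥ x) with hS2d
  clear_value S2
  have hquad : k * k * (u ⬝ᵥ (rootGram *ᵥ u)) + 144 * k = 144 * (k * k) * (2 * S2) := by
    have hL := hexpand (k • u) 12
    rw [hstar] at hL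
    rw [smul_dotProduct, Matrix.mulVec_smul, dotProduct_smul, smul_eq_mul, smul_eq_mul,
      hS2] at hL
    rw [smul_dotProduct, Matrix.mulVec_smul, dotProduct_smul, smul_eq_mul, smul_eq_mul] at hL
    linear_combination -hL
  have hkk : k * k ≠ 0 := ne_of_gt (mul_pos hkpos hkpos)
  have huRu : u ⬝ᵥ (rootGram *ᵥ u) = 288 * S2 - 12 * m := by
    have h1 : (k * k) * (u ⬝ᵥ (rootGram *ᵥ u)) = (k * k) * (288 * S2 - 12 * m) := by
      linear_combination hquad + (-12 * k) * hm
    exact mul_left_cancel₀ hkk h1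
  have hRu : rootGram *ᵥ u = (12:ℤ) • w := by
    rw [hu, mulVec_mulVec, hRN, Matrix.smul_mulVec, one_mulVec]
  -- Smith normal form step
  set s := matVp *ᵥ u with hs
  clear_value s
  have hVs : matV *ᵥ s = u := by rw [hs, mulVec_mulVec, hVVp, one_mulVec]
  have hstd : (Matrix.single (8:Fin 9) (8:Fin 9) (1:ℤ)) *ᵥ s
      = fun r => if r = 8 then s 8 else 0 := by
    funext r
    by_cases hr : r = (8 : Fin 9)
    · subst hr
      calc ((Matrix.single (8:Fin 9) (8:Fin 9) (1:ℤ)) *ᵥ s) 8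
          = ∑ j, (if (8:Fin 9) = 8 ∧ (8:Fin 9) = j then (1:ℤ) else 0) * s j := rfl
        _ = ∑ j, (if j = (8:Fin 9) then s j else 0) := by
            refine Finset.sum_congr rfl fun j _ => ?_
            by_cases hj : j = (8 : Fin 9)
            · subst hj; simp
            · rw [if_neg hj, if_neg (fun hcc => hj hcc.2.symm), zero_mul]
        _ = s 8 := by rw [Finset.sum_ite_eq' Finset.univ (8:Fin 9) (fun j => s j)]; simp
        _ = if (8:Fin 9) = 8 then s 8 else 0 := by simp
    · calc ((Matrix.single (8:Fin 9) (8:Fin 9) (1:ℤ)) *ᵥ s) r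
          = ∑ j, (if (8:Fin 9) = r ∧ (8:Fin 9) = j then (1:ℤ) else 0) * s j := rfl
        _ = 0 := by
            refine Finset.sum_eq_zero fun j _ => ?_
            rw [if_neg (fun hcc => hr hcc.1.symm), zero_mul]
        _ = if r = 8 then s 8 else 0 := by rw [if_neg hr]
  have hsplit2 : s + (11:ℤ) • (fun r => if r = 8 then s 8 else 0) = (12:ℤ) • (matU *ᵥ w) := by
    have h1 : (matU * rootGram * matV) *ᵥ s = (12:ℤ) • (matU *ᵥ w) := by
      rw [← mulVec_mulVec, hVs, ← mulVec_mulVec, hRu, Matrix.mulVec_smul]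
    rw [hURV, Matrix.add_mulVec, one_mulVec, Matrix.smul_mulVec, hstd] at h1
    exact h1
  set t := s (8:Fin 9) with ht
  set w2 : Fin 9 → ℤ := fun i => if i = 8 then 0 else (matU *ᵥ w) i with hw2
  clear_value t
  have hsw : s = t • delta8 + (12:ℤ) • w2 := by
    funext i
    have h1 := congrFun hsplit2 i
    simp only [Pi.add_apply, Pi.smul_apply, smul_eq_mul] at h1 ⊢
    rw [hw2]
    by_cases hi : i = (8 : Fin 9)
    · subst hi
      simp only [delta8, eq_self_iff_true, if_true, ht]
      ring
    · rw [if_neg hi] at h1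
      simp only [delta8, if_neg hi]
      linarith only [h1]
  set v := matV *ᵥ w2 with hv
  clear_value v
  have hue : u = t • vecg + (12:ℤ) • v := by
    rw [← hVs, hsw, Matrix.mulVec_add, Matrix.mulVec_smul, Matrix.mulVec_smul, hVg, hv]
  have hvRg : v ⬝ᵥ (rootGram *ᵥ vecg) = 12 * (v ⬝ᵥ vech) := by
    rw [hRg, dotProduct_smul, smul_eq_mul]
  have hgRv : vecg ⬝ᵥ (rootGram *ᵥ v) = 12 * (v ⬝ᵥ vech) := by
    rw [dot_swap, hRsymm, hvRg]
  have hvRv : v ⬝ᵥ (rootGram *ᵥ v) = 2 * (v ⬝ᵥ (matC *ᵥ v)) := even_quad matC rootGram hCsum v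
  have hfinal : u ⬝ᵥ (rootGram *ᵥ u)
      = -348 * (t * t) + 288 * (t * (v ⬝ᵥ vech)) + 288 * (v ⬝ᵥ (matC *ᵥ v)) := by
    rw [hue]
    simp only [Matrix.mulVec_add, dotProduct_add, add_dotProduct, Matrix.mulVec_smul,
      smul_dotProduct, dotProduct_smul, smul_eq_mul]
    rw [hgRg, hgRv, hvRg, hvRv]
    ring
  have hcong : -348 * (t * t) + 12 * m
      = 288 * (S2 - t * (v ⬝ᵥ vech) - (v ⬝ᵥ (matC *ᵥ v))) := by
    linear_combination huRu - hfinal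
  have hm4 : m = 1 ∨ m = 2 ∨ m = 3 ∨ m = 6 := by
    obtain ⟨k', hk'⟩ := hkeven
    have hkle : k ≤ 12 := Int.le_of_dvd (by norm_num) ⟨m, hm⟩
    exact m_cases k m k' hm hk' hkpos hkle
  have hzmod := congrArg (fun z : ℤ => (z : ZMod 288)) hcong
  push_cast at hzmod
  rw [show ((288:ZMod 288)) = 0 from by decide, zero_mul] at hzmod
  obtain ⟨c1, c2, c3, c4⟩ := final_cong ((t : ℤ) : ZMod 288)
  rcases hm4 with rfl | rfl | rfl | rfl
  · exact c1 (by linear_combination hzmod)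
  · exact c2 (by linear_combination hzmod)
  · exact c3 (by linear_combination hzmod)
  · exact c4 (by linear_combination hzmod)
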